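/- (Theorem 1, Section III) Let L ≥ 1, let α ∈ [0,1], and let w_k ≥ 0, w̃_k ≥ 0 for −(L−1) ≤ k ≤ L−1. Define the Hermitian matrix J = α·Σ_k w_k vec(A_k) vec(A_k)^H + (1−α)·Σ_k w̃_k vec(B_k) vec(B_k)^H. Then the largest eigenvalue of J equals max over k ∈ {−(L−1),…,L−1} of max( λ_A(k), λ_B(k) ), where λ_A(k) = α·w_k·(2L − 2|k|) and λ_B(k) = (1−α)·w̃_k·(L − |k|). -/

import Mathlib

open scoped BigOperators
open Matrix

/-- The `L × L` shift (Toeplitz) matrix `U_k` with `(U_k)_{i,j} = 1` if `j - i = k`. -/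
def shiftU (L : ℕ) (k : ℤ) : Matrix (Fin L) (Fin L) ℂ :=
  Matrix.of fun i j => if (j : ℤ) - (i : ℤ) = k then 1 else 0

/-- The `2L × 2L` block-diagonal matrix `A_k = diag(U_k, U_k)`. -/
def AMat (L : ℕ) (k : ℤ) : Matrix (Fin L ⊕ Fin L) (Fin L ⊕ Fin L) ℂ :=
  Matrix.fromBlocks (shiftU L k) 0 0 (shiftU L k)

/-- The `2L × 2L` block matrix `B_k = [[0, U_k], [0, 0]]`. -/
def BMat (L : ℕ) (k : ℤ) : Matrix (Fin L ⊕ Fin L) (Fin L ⊕ Fin L) ℂ :=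
  Matrix.fromBlocks 0 (shiftU L k) 0 0

/-- Vectorization of a square matrix. -/
def vecM {n : Type*} (M : Matrix n n ℂ) : n × n → ℂ := fun p => M p.1 p.2

/-- `J = α Σ_i w_i vec(A_i) vec(A_i)^H + (1-α) Σ_i w̃_i vec(B_i) vec(B_i)^H`. -/
noncomputable def JMat (L : ℕ) (α : ℝ) (w wt : ℤ → ℝ) :
    Matrix ((Fin L ⊕ Fin L) × (Fin L ⊕ Fin L)) ((Fin L ⊕ Fin L) × (Fin L ⊕ Fin L)) ℂ :=
  (α : ℂ) • ∑ k ∈ Finset.Icc (-(L : ℤ) + 1) ((L : ℤ) - 1),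
      (w k : ℂ) • Matrix.vecMulVec (vecM (AMat L k)) (star (vecM (AMat L k)))
  + ((1 - α : ℝ) : ℂ) • ∑ k ∈ Finset.Icc (-(L : ℤ) + 1) ((L : ℤ) - 1),
      (wt k : ℂ) • Matrix.vecMulVec (vecM (BMat L k)) (star (vecM (BMat L k)))

namespace Stmt7Aux

noncomputable def rA (L : ℕ) (k : ℤ) (p : (Fin L ⊕ Fin L) × (Fin L ⊕ Fin L)) : ℝ :=
  (vecM (AMat L k) p).re
noncomputable def rB (L : ℕ) (k : ℤ) (p : (Fin L ⊕ Fin L) × (Fin L ⊕ Fin L)) : ℝ :=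
  (vecM (BMat L k) p).re

lemma vecA_eq (L : ℕ) (k : ℤ) (p) : vecM (AMat L k) p = ((rA L k p : ℝ) : ℂ) := by
  rcases p with ⟨i | i, j | j⟩ <;> simp [rA, vecM, AMat, shiftU] <;> split <;> simp
lemma vecB_eq (L : ℕ) (k : ℤ) (p) : vecM (BMat L k) p = ((rB L k p : ℝ) : ℂ) := by
  rcases p with ⟨i | i, j | j⟩ <;> simp [rB, vecM, BMat, shiftU] <;> split <;> simp
lemma rA_idem (L : ℕ) (k : ℤ) (p) : rA L k p * rA L k p = rA L k p := by
  rcases p with ⟨i | i, j | j⟩ <;> simp [rA, vecM, AMat, shiftU] <;> split <;> simp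
lemma rB_idem (L : ℕ) (k : ℤ) (p) : rB L k p * rB L k p = rB L k p := by
  rcases p with ⟨i | i, j | j⟩ <;> simp [rB, vecM, BMat, shiftU] <;> split <;> simp
lemma rA_nonneg (L : ℕ) (k : ℤ) (p) : 0 ≤ rA L k p := by
  rcases p with ⟨i | i, j | j⟩ <;> simp [rA, vecM, AMat, shiftU] <;> split <;> simp
lemma rB_nonneg (L : ℕ) (k : ℤ) (p) : 0 ≤ rB L k p := by
  rcases p with ⟨i | i, j | j⟩ <;> simp [rB, vecM, BMat, shiftU] <;> split <;> simp
lemma star_vecA (L : ℕ) (k : ℤ) : star (vecM (AMat L k)) = vecM (AMat L k) := by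
  funext p; rw [Pi.star_apply, vecA_eq]; simp
lemma star_vecB (L : ℕ) (k : ℤ) : star (vecM (BMat L k)) = vecM (BMat L k) := by
  funext p; rw [Pi.star_apply, vecB_eq]; simp

lemma rA_11 (L : ℕ) (k : ℤ) (i j : Fin L) :
    rA L k (Sum.inl i, Sum.inl j) = if ((j:ℤ) - (i:ℤ) = k) then (1:ℝ) else 0 := by
  simp [rA, vecM, AMat, shiftU]; split <;> simp
lemma rA_22 (L : ℕ) (k : ℤ) (i j : Fin L) :
    rA L k (Sum.inr i, Sum.inr j) = if ((j:ℤ) - (i:ℤ) = k) then (1:ℝ) else 0 := by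
  simp [rA, vecM, AMat, shiftU]; split <;> simp
lemma rA_12 (L : ℕ) (k : ℤ) (i j : Fin L) : rA L k (Sum.inl i, Sum.inr j) = 0 := by
  simp [rA, vecM, AMat, shiftU]
lemma rA_21 (L : ℕ) (k : ℤ) (i j : Fin L) : rA L k (Sum.inr i, Sum.inl j) = 0 := by
  simp [rA, vecM, AMat, shiftU]
lemma rB_12 (L : ℕ) (k : ℤ) (i j : Fin L) :
    rB L k (Sum.inl i, Sum.inr j) = if ((j:ℤ) - (i:ℤ) = k) then (1:ℝ) else 0 := by
  simp [rB, vecM, BMat, shiftU]; split <;> simp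
lemma rB_11 (L : ℕ) (k : ℤ) (i j : Fin L) : rB L k (Sum.inl i, Sum.inl j) = 0 := by
  simp [rB, vecM, BMat, shiftU]
lemma rB_21 (L : ℕ) (k : ℤ) (i j : Fin L) : rB L k (Sum.inr i, Sum.inl j) = 0 := by
  simp [rB, vecM, BMat, shiftU]
lemma rB_22 (L : ℕ) (k : ℤ) (i j : Fin L) : rB L k (Sum.inr i, Sum.inr j) = 0 := by
  simp [rB, vecM, BMat, shiftU]

lemma card_shift (L : ℕ) (k : ℤ) (h1 : -(L:ℤ)+1 ≤ k) (h2 : k ≤ (L:ℤ)-1) :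
    (Finset.univ.filter (fun p : Fin L × Fin L => ((p.2:ℤ) - (p.1:ℤ) = k))).card
      = L - k.natAbs := by
  rw [← Finset.card_range (L - k.natAbs)]
  refine Finset.card_bij' (fun (p : Fin L × Fin L) _ => min (p.1:ℕ) (p.2:ℕ))
    (fun m hm => (⟨m + (-k).toNat, by simp only [Finset.mem_range] at hm; omega⟩,
                  ⟨m + k.toNat, by simp only [Finset.mem_range] at hm; omega⟩)) ?_ ?_ ?_ ?_
  · intro p hp
    simp only [Finset.mem_filter, Finset.mem_univ, true_and] at hp
    obtain ⟨⟨a, ha⟩, ⟨b, hb⟩⟩ := p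
    simp only [Fin.val_mk] at hp ⊢
    simp only [Finset.mem_range]
    omega
  · intro m hm
    simp only [Finset.mem_range] at hm
    simp only [Finset.mem_filter, Finset.mem_univ, true_and, Fin.val_mk]
    push_cast
    omega
  · intro p hp
    simp only [Finset.mem_filter, Finset.mem_univ, true_and] at hp
    obtain ⟨⟨a, ha⟩, ⟨b, hb⟩⟩ := p
    simp only [Fin.val_mk] at hp ⊢
    have h : (min a b) + (-k).toNat = a ∧ (min a b) + k.toNat = b := by omega
    simp only [Prod.ext_iff, Fin.ext_iff, Fin.val_mk]
    exact ⟨h.1, h.2⟩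
  · intro m hm
    simp only [Finset.mem_range] at hm
    simp only [Fin.val_mk]
    omega

lemma sum_shift (L : ℕ) (k : ℤ) (h1 : -(L:ℤ)+1 ≤ k) (h2 : k ≤ (L:ℤ)-1) :
    (∑ i : Fin L, ∑ j : Fin L, if ((j:ℤ) - (i:ℤ) = k) then (1:ℝ) else 0)
      = (L:ℝ) - k.natAbs := by
  rw [← Finset.sum_product', Finset.univ_product_univ, Finset.sum_boole, card_shift L k h1 h2]
  have h : k.natAbs ≤ L := by omega
  push_cast [Nat.cast_sub h]
  ring

lemma sum_rA (L : ℕ) (k : ℤ) (h1 : -(L:ℤ)+1 ≤ k) (h2 : k ≤ (L:ℤ)-1) :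
    ∑ p : (Fin L ⊕ Fin L) × (Fin L ⊕ Fin L), rA L k p
      = 2*(L:ℝ) - 2*(k.natAbs:ℝ) := by
  rw [Fintype.sum_prod_type, Fintype.sum_sum_type]
  simp only [Fintype.sum_sum_type, rA_11, rA_12, rA_21, rA_22]
  simp only [Finset.sum_const_zero, add_zero, zero_add, Finset.sum_add_distrib]
  rw [sum_shift L k h1 h2]; ring

lemma sum_rB (L : ℕ) (k : ℤ) (h1 : -(L:ℤ)+1 ≤ k) (h2 : k ≤ (L:ℤ)-1) :
    ∑ p : (Fin L ⊕ Fin L) × (Fin L ⊕ Fin L), rB L k p = (L:ℝ) - (k.natAbs:ℝ) := by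
  rw [Fintype.sum_prod_type, Fintype.sum_sum_type]
  simp only [Fintype.sum_sum_type, rB_11, rB_12, rB_21, rB_22]
  simp only [Finset.sum_const_zero, add_zero, zero_add, Finset.sum_add_distrib]
  rw [sum_shift L k h1 h2]

lemma disj (L : ℕ) (p : (Fin L ⊕ Fin L) × (Fin L ⊕ Fin L)) :
    ∑ k ∈ Finset.Icc (-(L:ℤ)+1) ((L:ℤ)-1), (rA L k p + rB L k p) ≤ 1 := by
  rcases p with ⟨i | i, j | j⟩
  · simp only [rA_11, rB_11, add_zero]
    rw [Finset.sum_ite_eq]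
    split <;> norm_num
  · simp only [rA_12, rB_12, zero_add]
    rw [Finset.sum_ite_eq]
    split <;> norm_num
  · simp only [rA_21, rB_21, add_zero]
    simp
  · simp only [rA_22, rB_22, add_zero]
    rw [Finset.sum_ite_eq]
    split <;> norm_num

lemma dotA_x (L : ℕ) (k : ℤ) (x : (Fin L ⊕ Fin L) × (Fin L ⊕ Fin L) → ℂ) :
    vecM (AMat L k) ⬝ᵥ x = ∑ p, (rA L k p : ℂ) * x p := by
  simp only [dotProduct]
  exact Finset.sum_congr rfl fun p _ => by rw [vecA_eq]

lemma dotB_x (L : ℕ) (k : ℤ) (x : (Fin L ⊕ Fin L) × (Fin L ⊕ Fin L) → ℂ) :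
    vecM (BMat L k) ⬝ᵥ x = ∑ p, (rB L k p : ℂ) * x p := by
  simp only [dotProduct]
  exact Finset.sum_congr rfl fun p _ => by rw [vecB_eq]

lemma dotAA_ne (L : ℕ) {k k' : ℤ} (h : k ≠ k') :
    vecM (AMat L k) ⬝ᵥ vecM (AMat L k') = 0 := by
  refine Finset.sum_eq_zero fun p _ => ?_
  rcases p with ⟨i | i, j | j⟩ <;>
    simp [vecM, AMat, shiftU] <;> intro h1 h2 <;> omega
lemma dotBB_ne (L : ℕ) {k k' : ℤ} (h : k ≠ k') :
    vecM (BMat L k) ⬝ᵥ vecM (BMat L k') = 0 := by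
  refine Finset.sum_eq_zero fun p _ => ?_
  rcases p with ⟨i | i, j | j⟩ <;>
    simp [vecM, BMat, shiftU] <;> intro h1 h2 <;> omega
lemma dotAB (L : ℕ) (k k' : ℤ) : vecM (AMat L k) ⬝ᵥ vecM (BMat L k') = 0 := by
  refine Finset.sum_eq_zero fun p _ => ?_
  rcases p with ⟨i | i, j | j⟩ <;> simp [vecM, AMat, BMat, shiftU]
lemma dotBA (L : ℕ) (k k' : ℤ) : vecM (BMat L k) ⬝ᵥ vecM (AMat L k') = 0 := by
  refine Finset.sum_eq_zero fun p _ => ?_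
  rcases p with ⟨i | i, j | j⟩ <;> simp [vecM, AMat, BMat, shiftU]

lemma dotAA_self (L : ℕ) (k : ℤ) (h1 : -(L:ℤ)+1 ≤ k) (h2 : k ≤ (L:ℤ)-1) :
    vecM (AMat L k) ⬝ᵥ vecM (AMat L k) = ((2*(L:ℝ) - 2*(k.natAbs:ℝ) : ℝ) : ℂ) := by
  rw [dotA_x]
  have : ∀ p, (rA L k p : ℂ) * vecM (AMat L k) p = ((rA L k p : ℝ) : ℂ) := by
    intro p; rw [vecA_eq, ← Complex.ofReal_mul, rA_idem]
  rw [Finset.sum_congr rfl fun p _ => this p, ← Complex.ofReal_sum, sum_rA L k h1 h2]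

lemma dotBB_self (L : ℕ) (k : ℤ) (h1 : -(L:ℤ)+1 ≤ k) (h2 : k ≤ (L:ℤ)-1) :
    vecM (BMat L k) ⬝ᵥ vecM (BMat L k) = (((L:ℝ) - (k.natAbs:ℝ) : ℝ) : ℂ) := by
  rw [dotB_x]
  have : ∀ p, (rB L k p : ℂ) * vecM (BMat L k) p = ((rB L k p : ℝ) : ℂ) := by
    intro p; rw [vecB_eq, ← Complex.ofReal_mul, rB_idem]
  rw [Finset.sum_congr rfl fun p _ => this p, ← Complex.ofReal_sum, sum_rB L k h1 h2]


lemma dotProduct_sum' {ι n : Type*} [Fintype n] (s : Finset ι) (v : n → ℂ) (f : ι → n → ℂ) :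
    v ⬝ᵥ (∑ k ∈ s, f k) = ∑ k ∈ s, v ⬝ᵥ f k := by
  simp only [dotProduct, Finset.sum_apply, Finset.mul_sum]
  exact Finset.sum_comm

lemma sum_mulVec' {ι n m : Type*} [Fintype m] (s : Finset ι) (M : ι → Matrix n m ℂ) (x : m → ℂ) :
    (∑ k ∈ s, M k) *ᵥ x = ∑ k ∈ s, (M k *ᵥ x) := by
  ext i
  simp only [Matrix.mulVec, dotProduct, Matrix.sum_apply, Finset.sum_apply, Finset.sum_mul]
  exact Finset.sum_comm

lemma vecMulVec_mulVec' {n : Type*} [Fintype n] (u v x : n → ℂ) :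
    (vecMulVec u v) *ᵥ x = (v ⬝ᵥ x) • u := by
  ext i
  simp only [Matrix.mulVec, dotProduct, vecMulVec_apply, Pi.smul_apply, smul_eq_mul,
    Finset.sum_mul]
  exact Finset.sum_congr rfl fun j _ => by ring

lemma JMat_mulVec (L : ℕ) (α : ℝ) (w wt : ℤ → ℝ) (x : (Fin L ⊕ Fin L) × (Fin L ⊕ Fin L) → ℂ) :
    JMat L α w wt *ᵥ x =
      (α:ℂ) • ∑ k ∈ Finset.Icc (-(L:ℤ)+1) ((L:ℤ)-1),
          (w k : ℂ) • ((vecM (AMat L k) ⬝ᵥ x) • vecM (AMat L k))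
    + ((1-α:ℝ):ℂ) • ∑ k ∈ Finset.Icc (-(L:ℤ)+1) ((L:ℤ)-1),
          (wt k : ℂ) • ((vecM (BMat L k) ⬝ᵥ x) • vecM (BMat L k)) := by
  unfold JMat
  rw [Matrix.add_mulVec, Matrix.smul_mulVec, Matrix.smul_mulVec,
    sum_mulVec', sum_mulVec']
  congr 2
  · refine Finset.sum_congr rfl fun k _ => ?_
    rw [Matrix.smul_mulVec, vecMulVec_mulVec', star_vecA]
  · refine Finset.sum_congr rfl fun k _ => ?_
    rw [Matrix.smul_mulVec, vecMulVec_mulVec', star_vecB]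

lemma quad_eq (L : ℕ) (α : ℝ) (w wt : ℤ → ℝ) (x : (Fin L ⊕ Fin L) × (Fin L ⊕ Fin L) → ℂ) :
    star x ⬝ᵥ (JMat L α w wt *ᵥ x)
      = ((α * ∑ k ∈ Finset.Icc (-(L:ℤ)+1) ((L:ℤ)-1),
            w k * Complex.normSq (vecM (AMat L k) ⬝ᵥ x)
          + (1-α) * ∑ k ∈ Finset.Icc (-(L:ℤ)+1) ((L:ℤ)-1),
            wt k * Complex.normSq (vecM (BMat L k) ⬝ᵥ x) : ℝ) : ℂ) := by
  rw [JMat_mulVec, dotProduct_add, dotProduct_smul, dotProduct_smul,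
    dotProduct_sum', dotProduct_sum']
  have hA : ∀ k, star x ⬝ᵥ ((w k : ℂ) • ((vecM (AMat L k) ⬝ᵥ x) • vecM (AMat L k)))
      = ((w k * Complex.normSq (vecM (AMat L k) ⬝ᵥ x) : ℝ) : ℂ) := by
    intro k
    rw [dotProduct_smul, dotProduct_smul]
    have : star x ⬝ᵥ vecM (AMat L k) = star (vecM (AMat L k) ⬝ᵥ x) := by
      conv_lhs => rw [← star_vecA]
      rw [Matrix.star_dotProduct_star]
    rw [this]
    simp only [smul_eq_mul]
    rw [RCLike.star_def, show (w k : ℂ) * ((vecM (AMat L k) ⬝ᵥ x)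
        * (starRingEnd ℂ) (vecM (AMat L k) ⬝ᵥ x)) = (w k : ℂ)
        * ((vecM (AMat L k) ⬝ᵥ x) * (starRingEnd ℂ) (vecM (AMat L k) ⬝ᵥ x)) from rfl,
      Complex.mul_conj, ← Complex.ofReal_mul]
  have hB : ∀ k, star x ⬝ᵥ ((wt k : ℂ) • ((vecM (BMat L k) ⬝ᵥ x) • vecM (BMat L k)))
      = ((wt k * Complex.normSq (vecM (BMat L k) ⬝ᵥ x) : ℝ) : ℂ) := by
    intro k
    rw [dotProduct_smul, dotProduct_smul]
    have : star x ⬝ᵥ vecM (BMat L k) = star (vecM (BMat L k) ⬝ᵥ x) := by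
      conv_lhs => rw [← star_vecB]
      rw [Matrix.star_dotProduct_star]
    rw [this]
    simp only [smul_eq_mul]
    rw [RCLike.star_def, Complex.mul_conj, ← Complex.ofReal_mul]
  rw [Finset.sum_congr rfl fun k _ => hA k, Finset.sum_congr rfl fun k _ => hB k]
  simp only [smul_eq_mul]
  push_cast
  ring

lemma cs_aux {ι : Type*} [Fintype ι] (r : ι → ℝ) (hr : ∀ p, r p * r p = r p) (x : ι → ℂ) :
    Complex.normSq (∑ p, (r p : ℂ) * x p)
      ≤ (∑ p, r p) * ∑ p, r p * Complex.normSq (x p) := by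
  have hre : (∑ p, (r p : ℂ) * x p).re = ∑ p, r p * (x p).re := by
    rw [Complex.re_sum]; exact Finset.sum_congr rfl fun p _ => by simp
  have him : (∑ p, (r p : ℂ) * x p).im = ∑ p, r p * (x p).im := by
    rw [Complex.im_sum]; exact Finset.sum_congr rfl fun p _ => by simp
  rw [Complex.normSq_apply, hre, him]
  have h1 : (∑ p, r p * (x p).re) ^ 2 ≤ (∑ p, r p) * ∑ p, r p * ((x p).re)^2 := by
    have h := Finset.sum_mul_sq_le_sq_mul_sq Finset.univ r (fun p => r p * (x p).re)
    calc (∑ p, r p * (x p).re) ^ 2 = (∑ p, r p * (r p * (x p).re)) ^ 2 := by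
          congr 1; exact Finset.sum_congr rfl fun p _ => by rw [← mul_assoc, hr]
      _ ≤ (∑ p, r p ^ 2) * ∑ p, (r p * (x p).re) ^ 2 := h
      _ = (∑ p, r p) * ∑ p, r p * ((x p).re)^2 := by
          congr 1
          · exact Finset.sum_congr rfl fun p _ => by rw [sq, hr]
          · exact Finset.sum_congr rfl fun p _ => by rw [mul_pow, sq (r p), hr]
  have h2 : (∑ p, r p * (x p).im) ^ 2 ≤ (∑ p, r p) * ∑ p, r p * ((x p).im)^2 := by
    have h := Finset.sum_mul_sq_le_sq_mul_sq Finset.univ r (fun p => r p * (x p).im)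
    calc (∑ p, r p * (x p).im) ^ 2 = (∑ p, r p * (r p * (x p).im)) ^ 2 := by
          congr 1; exact Finset.sum_congr rfl fun p _ => by rw [← mul_assoc, hr]
      _ ≤ (∑ p, r p ^ 2) * ∑ p, (r p * (x p).im) ^ 2 := h
      _ = (∑ p, r p) * ∑ p, r p * ((x p).im)^2 := by
          congr 1
          · exact Finset.sum_congr rfl fun p _ => by rw [sq, hr]
          · exact Finset.sum_congr rfl fun p _ => by rw [mul_pow, sq (r p), hr]
  calc (∑ p, r p * (x p).re) * (∑ p, r p * (x p).re)
        + (∑ p, r p * (x p).im) * (∑ p, r p * (x p).im)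
      = (∑ p, r p * (x p).re)^2 + (∑ p, r p * (x p).im)^2 := by ring
    _ ≤ (∑ p, r p) * ∑ p, r p * ((x p).re)^2 + (∑ p, r p) * ∑ p, r p * ((x p).im)^2 :=
        add_le_add h1 h2
    _ = (∑ p, r p) * ∑ p, r p * Complex.normSq (x p) := by
        rw [← mul_add, ← Finset.sum_add_distrib]
        congr 1
        exact Finset.sum_congr rfl fun p _ => by rw [Complex.normSq_apply]; ring

lemma quad_bound (L : ℕ) (α : ℝ) (w wt : ℤ → ℝ) (hα0 : 0 ≤ α) (hα1 : α ≤ 1)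
    (hw : ∀ k, 0 ≤ w k) (hwt : ∀ k, 0 ≤ wt k) (c : ℝ) (hc0 : 0 ≤ c)
    (hcA : ∀ k ∈ Finset.Icc (-(L:ℤ)+1) ((L:ℤ)-1),
      α * w k * (2*(L:ℝ) - 2*(k.natAbs:ℝ)) ≤ c)
    (hcB : ∀ k ∈ Finset.Icc (-(L:ℤ)+1) ((L:ℤ)-1),
      (1-α) * wt k * ((L:ℝ) - (k.natAbs:ℝ)) ≤ c)
    (x : (Fin L ⊕ Fin L) × (Fin L ⊕ Fin L) → ℂ) :
    (star x ⬝ᵥ (JMat L α w wt *ᵥ x)).re ≤ c * ∑ p, Complex.normSq (x p) := by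
  rw [quad_eq, Complex.ofReal_re]
  have hAk : ∀ k ∈ Finset.Icc (-(L:ℤ)+1) ((L:ℤ)-1),
      α * (w k * Complex.normSq (vecM (AMat L k) ⬝ᵥ x))
        ≤ c * ∑ p, rA L k p * Complex.normSq (x p) := by
    intro k hk
    obtain ⟨h1, h2⟩ := Finset.mem_Icc.mp hk
    have hcs := cs_aux (rA L k) (rA_idem L k) x
    rw [sum_rA L k h1 h2] at hcs
    rw [← dotA_x] at hcs
    have hs0 : 0 ≤ ∑ p, rA L k p * Complex.normSq (x p) :=
      Finset.sum_nonneg fun p _ => mul_nonneg (rA_nonneg L k p) (Complex.normSq_nonneg _)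
    calc α * (w k * Complex.normSq (vecM (AMat L k) ⬝ᵥ x))
        ≤ α * (w k * ((2*(L:ℝ) - 2*(k.natAbs:ℝ)) * ∑ p, rA L k p * Complex.normSq (x p))) := by
          apply mul_le_mul_of_nonneg_left _ hα0
          exact mul_le_mul_of_nonneg_left hcs (hw k)
      _ = (α * w k * (2*(L:ℝ) - 2*(k.natAbs:ℝ))) * ∑ p, rA L k p * Complex.normSq (x p) := by
          ring
      _ ≤ c * ∑ p, rA L k p * Complex.normSq (x p) :=
          mul_le_mul_of_nonneg_right (hcA k hk) hs0
  have hBk : ∀ k ∈ Finset.Icc (-(L:ℤ)+1) ((L:ℤ)-1),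
      (1-α) * (wt k * Complex.normSq (vecM (BMat L k) ⬝ᵥ x))
        ≤ c * ∑ p, rB L k p * Complex.normSq (x p) := by
    intro k hk
    obtain ⟨h1, h2⟩ := Finset.mem_Icc.mp hk
    have hcs := cs_aux (rB L k) (rB_idem L k) x
    rw [sum_rB L k h1 h2] at hcs
    rw [← dotB_x] at hcs
    have hs0 : 0 ≤ ∑ p, rB L k p * Complex.normSq (x p) :=
      Finset.sum_nonneg fun p _ => mul_nonneg (rB_nonneg L k p) (Complex.normSq_nonneg _)
    calc (1-α) * (wt k * Complex.normSq (vecM (BMat L k) ⬝ᵥ x))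
        ≤ (1-α) * (wt k * (((L:ℝ) - (k.natAbs:ℝ)) * ∑ p, rB L k p * Complex.normSq (x p))) := by
          apply mul_le_mul_of_nonneg_left _ (by linarith)
          exact mul_le_mul_of_nonneg_left hcs (hwt k)
      _ = ((1-α) * wt k * ((L:ℝ) - (k.natAbs:ℝ))) * ∑ p, rB L k p * Complex.normSq (x p) := by
          ring
      _ ≤ c * ∑ p, rB L k p * Complex.normSq (x p) :=
          mul_le_mul_of_nonneg_right (hcB k hk) hs0
  calc α * (∑ k ∈ Finset.Icc (-(L:ℤ)+1) ((L:ℤ)-1), w k * Complex.normSq (vecM (AMat L k) ⬝ᵥ x))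
        + (1-α) * ∑ k ∈ Finset.Icc (-(L:ℤ)+1) ((L:ℤ)-1),
            wt k * Complex.normSq (vecM (BMat L k) ⬝ᵥ x)
      = (∑ k ∈ Finset.Icc (-(L:ℤ)+1) ((L:ℤ)-1),
            α * (w k * Complex.normSq (vecM (AMat L k) ⬝ᵥ x)))
        + ∑ k ∈ Finset.Icc (-(L:ℤ)+1) ((L:ℤ)-1),
            (1-α) * (wt k * Complex.normSq (vecM (BMat L k) ⬝ᵥ x)) := by
        rw [Finset.mul_sum, Finset.mul_sum]
    _ ≤ (∑ k ∈ Finset.Icc (-(L:ℤ)+1) ((L:ℤ)-1), c * ∑ p, rA L k p * Complex.normSq (x p))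
        + ∑ k ∈ Finset.Icc (-(L:ℤ)+1) ((L:ℤ)-1), c * ∑ p, rB L k p * Complex.normSq (x p) :=
        add_le_add (Finset.sum_le_sum hAk) (Finset.sum_le_sum hBk)
    _ = c * ∑ p, (∑ k ∈ Finset.Icc (-(L:ℤ)+1) ((L:ℤ)-1), (rA L k p + rB L k p))
          * Complex.normSq (x p) := by
        rw [← Finset.sum_add_distrib]
        simp_rw [← mul_add]
        rw [← Finset.mul_sum]
        congr 1
        calc ∑ k ∈ Finset.Icc (-(L:ℤ)+1) ((L:ℤ)-1),
              (∑ p, rA L k p * Complex.normSq (x p) + ∑ p, rB L k p * Complex.normSq (x p))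
            = ∑ k ∈ Finset.Icc (-(L:ℤ)+1) ((L:ℤ)-1),
                ∑ p, (rA L k p * Complex.normSq (x p) + rB L k p * Complex.normSq (x p)) := by
              exact Finset.sum_congr rfl fun k _ => (Finset.sum_add_distrib).symm
          _ = ∑ p, ∑ k ∈ Finset.Icc (-(L:ℤ)+1) ((L:ℤ)-1),
                (rA L k p * Complex.normSq (x p) + rB L k p * Complex.normSq (x p)) :=
              Finset.sum_comm
          _ = ∑ p, (∑ k ∈ Finset.Icc (-(L:ℤ)+1) ((L:ℤ)-1), (rA L k p + rB L k p))
                * Complex.normSq (x p) := by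
              refine Finset.sum_congr rfl fun p _ => ?_
              rw [Finset.sum_mul]
              exact Finset.sum_congr rfl fun k _ => by ring
    _ ≤ c * ∑ p, Complex.normSq (x p) := by
        apply mul_le_mul_of_nonneg_left _ hc0
        refine Finset.sum_le_sum fun p _ => ?_
        calc (∑ k ∈ Finset.Icc (-(L:ℤ)+1) ((L:ℤ)-1), (rA L k p + rB L k p))
              * Complex.normSq (x p)
            ≤ 1 * Complex.normSq (x p) :=
              mul_le_mul_of_nonneg_right (disj L p) (Complex.normSq_nonneg _)
          _ = Complex.normSq (x p) := one_mul _

lemma eigA (L : ℕ) (α : ℝ) (w wt : ℤ → ℝ) (k : ℤ)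
    (hk : k ∈ Finset.Icc (-(L:ℤ)+1) ((L:ℤ)-1)) :
    JMat L α w wt *ᵥ vecM (AMat L k)
      = ((α * w k * (2*(L:ℝ) - 2*(k.natAbs:ℝ)) : ℝ) : ℂ) • vecM (AMat L k) := by
  obtain ⟨h1, h2⟩ := Finset.mem_Icc.mp hk
  rw [JMat_mulVec]
  have hB0 : ∀ k' ∈ Finset.Icc (-(L:ℤ)+1) ((L:ℤ)-1),
      (wt k' : ℂ) • ((vecM (BMat L k') ⬝ᵥ vecM (AMat L k)) • vecM (BMat L k'))
        = 0 := by
    intro k' _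
    rw [dotBA, zero_smul, smul_zero]
  rw [Finset.sum_congr rfl hB0, Finset.sum_const_zero, smul_zero, add_zero]
  rw [Finset.sum_eq_single k]
  · rw [dotAA_self L k h1 h2, smul_smul, smul_smul]
    congr 1
    push_cast
    ring
  · intro k' _ hne
    rw [dotAA_ne L hne, zero_smul, smul_zero]
  · intro h; exact absurd hk h

lemma eigB (L : ℕ) (α : ℝ) (w wt : ℤ → ℝ) (k : ℤ)
    (hk : k ∈ Finset.Icc (-(L:ℤ)+1) ((L:ℤ)-1)) :
    JMat L α w wt *ᵥ vecM (BMat L k)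
      = (((1-α) * wt k * ((L:ℝ) - (k.natAbs:ℝ)) : ℝ) : ℂ) • vecM (BMat L k) := by
  obtain ⟨h1, h2⟩ := Finset.mem_Icc.mp hk
  rw [JMat_mulVec]
  have hA0 : ∀ k' ∈ Finset.Icc (-(L:ℤ)+1) ((L:ℤ)-1),
      (w k' : ℂ) • ((vecM (AMat L k') ⬝ᵥ vecM (BMat L k)) • vecM (AMat L k'))
        = 0 := by
    intro k' _
    rw [dotAB, zero_smul, smul_zero]
  rw [Finset.sum_congr rfl hA0, Finset.sum_const_zero, smul_zero, zero_add]
  rw [Finset.sum_eq_single k]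
  · rw [dotBB_self L k h1 h2, smul_smul, smul_smul]
    congr 1
    push_cast
    ring
  · intro k' _ hne
    rw [dotBB_ne L hne, zero_smul, smul_zero]
  · intro h; exact absurd hk h

lemma rc_ofReal (r : ℝ) : (RCLike.ofReal r : ℂ) = Complex.ofReal r := rfl

lemma rayleigh_upper {n : Type*} [Fintype n] [DecidableEq n] [Nonempty n]
    {A : Matrix n n ℂ} (hA : A.IsHermitian) (x : n → ℂ) :
    (star x ⬝ᵥ (A *ᵥ x)).re ≤ (⨆ i, hA.eigenvalues i) * (star x ⬝ᵥ x).re := by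
  set U : Matrix n n ℂ := (hA.eigenvectorUnitary : Matrix n n ℂ) with hUdef
  have hU : U * star U = 1 := Matrix.mem_unitaryGroup_iff.mp hA.eigenvectorUnitary.2
  set y : n → ℂ := star U *ᵥ x with hydef
  have hsy : star x ᵥ* U = star y := by
    rw [hydef, star_mulVec, Matrix.star_eq_conjTranspose, conjTranspose_conjTranspose]
  have key : ∀ D : Matrix n n ℂ, star x ⬝ᵥ ((U * D * star U) *ᵥ x) = star y ⬝ᵥ (D *ᵥ y) := by
    intro D
    rw [← mulVec_mulVec, ← mulVec_mulVec, dotProduct_mulVec, hsy]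
  have h1 : star x ⬝ᵥ (A *ᵥ x) = star y ⬝ᵥ (diagonal (RCLike.ofReal ∘ hA.eigenvalues) *ᵥ y) := by
    conv_lhs => rw [hA.spectral_theorem]
    exact key _
  have h2 : star x ⬝ᵥ x = star y ⬝ᵥ y := by
    have h := key 1
    rwa [mul_one, hU, one_mulVec, one_mulVec] at h
  have hdiag : (star y ⬝ᵥ (diagonal (RCLike.ofReal ∘ hA.eigenvalues) *ᵥ y)).re
      = ∑ i, hA.eigenvalues i * Complex.normSq (y i) := by
    rw [dotProduct, Complex.re_sum]
    refine Finset.sum_congr rfl fun i _ => ?_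
    rw [mulVec_diagonal]
    simp only [Pi.star_apply, Function.comp_apply]
    simp only [RCLike.star_def, rc_ofReal, Complex.mul_re, Complex.mul_im, Complex.conj_re,
      Complex.conj_im, Complex.ofReal_re, Complex.ofReal_im, Complex.normSq_apply]
    ring
  have hyy : (star y ⬝ᵥ y).re = ∑ i, Complex.normSq (y i) := by
    rw [dotProduct, Complex.re_sum]
    refine Finset.sum_congr rfl fun i _ => ?_
    simp only [Pi.star_apply, RCLike.star_def, Complex.mul_re, Complex.conj_re,
      Complex.conj_im, Complex.normSq_apply]
    ring
  rw [h1, hdiag, h2, hyy]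
  calc ∑ i, hA.eigenvalues i * Complex.normSq (y i)
      ≤ ∑ i, (⨆ j, hA.eigenvalues j) * Complex.normSq (y i) := by
        refine Finset.sum_le_sum fun i _ => ?_
        exact mul_le_mul_of_nonneg_right
          (le_ciSup (Set.Finite.bddAbove (Set.finite_range _)) i) (Complex.normSq_nonneg _)
    _ = (⨆ j, hA.eigenvalues j) * ∑ i, Complex.normSq (y i) := by rw [Finset.mul_sum]

end Stmt7Aux

open Stmt7Aux

/-- (Theorem 1, Section III) For `α ∈ [0,1]` and nonnegative weights, the largest
eigenvalue of the Hermitian matrix `J` equals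
`max_{k ∈ {-(L-1),…,L-1}} max(λ_A(k), λ_B(k))` where `λ_A(k) = α w_k (2L - 2|k|)` and
`λ_B(k) = (1-α) w̃_k (L - |k|)`. -/
theorem stmt7 (L : ℕ) (hL : 1 ≤ L) (α : ℝ) (hα0 : 0 ≤ α) (hα1 : α ≤ 1)
    (w wt : ℤ → ℝ) (hw : ∀ k, 0 ≤ w k) (hwt : ∀ k, 0 ≤ wt k)
    (hJ : (JMat L α w wt).IsHermitian)
    (hne : (Finset.Icc (-(L : ℤ) + 1) ((L : ℤ) - 1)).Nonempty) :
    (⨆ i, hJ.eigenvalues i)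
      = (Finset.Icc (-(L : ℤ) + 1) ((L : ℤ) - 1)).sup' hne
          (fun k => max (α * w k * (2 * (L : ℝ) - 2 * (k.natAbs : ℝ)))
            ((1 - α) * wt k * ((L : ℝ) - (k.natAbs : ℝ)))) := by
  classical
  haveI : Nonempty (Fin L) := ⟨⟨0, hL⟩⟩
  set m0 := (Finset.Icc (-(L : ℤ) + 1) ((L : ℤ) - 1)).sup' hne
      (fun k => max (α * w k * (2 * (L : ℝ) - 2 * (k.natAbs : ℝ)))
        ((1 - α) * wt k * ((L : ℝ) - (k.natAbs : ℝ)))) with hm0def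
  have hm0A : ∀ k ∈ Finset.Icc (-(L:ℤ)+1) ((L:ℤ)-1),
      α * w k * (2*(L:ℝ) - 2*(k.natAbs:ℝ)) ≤ m0 := by
    intro k hk
    exact le_trans (le_max_left _ _)
      (Finset.le_sup' (fun k : ℤ => max (α * w k * (2 * (L : ℝ) - 2 * (k.natAbs : ℝ)))
        ((1 - α) * wt k * ((L : ℝ) - (k.natAbs : ℝ)))) hk)
  have hm0B : ∀ k ∈ Finset.Icc (-(L:ℤ)+1) ((L:ℤ)-1),
      (1-α) * wt k * ((L:ℝ) - (k.natAbs:ℝ)) ≤ m0 := by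
    intro k hk
    exact le_trans (le_max_right _ _)
      (Finset.le_sup' (fun k : ℤ => max (α * w k * (2 * (L : ℝ) - 2 * (k.natAbs : ℝ)))
        ((1 - α) * wt k * ((L : ℝ) - (k.natAbs : ℝ)))) hk)
  have hm0 : 0 ≤ m0 := by
    obtain ⟨k0, hk0⟩ := hne
    refine le_trans ?_ (hm0A k0 hk0)
    obtain ⟨h1, h2⟩ := Finset.mem_Icc.mp hk0
    have hna : (k0.natAbs : ℤ) ≤ (L:ℤ) := by omega
    have hna' : (k0.natAbs : ℝ) ≤ (L:ℝ) := by exact_mod_cast hna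
    exact mul_nonneg (mul_nonneg hα0 (hw k0)) (by linarith)
  refine le_antisymm (ciSup_le fun i => ?_) (Finset.sup'_le hne _ fun k hk => ?_)
  · -- each eigenvalue ≤ m0
    rw [hJ.eigenvalues_eq i]
    set e : (Fin L ⊕ Fin L) × (Fin L ⊕ Fin L) → ℂ := ⇑(hJ.eigenvectorBasis i) with hedef
    have hunit : ∑ p, Complex.normSq (e p) = 1 := by
      have hn := hJ.eigenvectorBasis.orthonormal.1 i
      have h2 : ‖hJ.eigenvectorBasis i‖^2 = 1 := by rw [hn]; norm_num
      rw [EuclideanSpace.norm_eq,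
        Real.sq_sqrt (Finset.sum_nonneg fun p _ => sq_nonneg _)] at h2
      rw [← h2]
      refine Finset.sum_congr rfl fun p _ => ?_
      rw [Complex.normSq_eq_norm_sq]
    have hb := quad_bound L α w wt hα0 hα1 hw hwt m0 hm0 hm0A hm0B e
    have hre : RCLike.re (star e ⬝ᵥ (JMat L α w wt *ᵥ e))
        = (star e ⬝ᵥ (JMat L α w wt *ᵥ e)).re := rfl
    rw [hunit, mul_one] at hb
    exact le_trans (le_of_eq hre) hb
  · obtain ⟨h1, h2⟩ := Finset.mem_Icc.mp hk
    have hna : (k.natAbs : ℤ) ≤ (L:ℤ) - 1 := by omega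
    have hna' : (k.natAbs : ℝ) ≤ (L:ℝ) - 1 := by exact_mod_cast hna
    refine max_le ?_ ?_
    · have hNA : (0:ℝ) < 2*(L:ℝ) - 2*(k.natAbs:ℝ) := by linarith
      have hq : star (vecM (AMat L k)) ⬝ᵥ (JMat L α w wt *ᵥ vecM (AMat L k))
          = ((α * w k * (2*(L:ℝ) - 2*(k.natAbs:ℝ)) * (2*(L:ℝ) - 2*(k.natAbs:ℝ)) : ℝ) : ℂ) := by
        rw [eigA L α w wt k hk, dotProduct_smul, star_vecA, dotAA_self L k h1 h2]
        simp only [smul_eq_mul]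
        push_cast
        ring
      have hvv : (star (vecM (AMat L k)) ⬝ᵥ vecM (AMat L k)).re
          = 2*(L:ℝ) - 2*(k.natAbs:ℝ) := by
        rw [star_vecA, dotAA_self L k h1 h2, Complex.ofReal_re]
      have hr := rayleigh_upper hJ (vecM (AMat L k))
      rw [hq, Complex.ofReal_re, hvv] at hr
      have : α * w k * (2 * (L:ℝ) - 2 * (k.natAbs:ℝ)) * (2*(L:ℝ) - 2*(k.natAbs:ℝ))
          ≤ (⨆ i, hJ.eigenvalues i) * (2*(L:ℝ) - 2*(k.natAbs:ℝ)) := hr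
      exact le_of_mul_le_mul_right this hNA
    · have hNB : (0:ℝ) < (L:ℝ) - (k.natAbs:ℝ) := by linarith
      have hq : star (vecM (BMat L k)) ⬝ᵥ (JMat L α w wt *ᵥ vecM (BMat L k))
          = (((1-α) * wt k * ((L:ℝ) - (k.natAbs:ℝ)) * ((L:ℝ) - (k.natAbs:ℝ)) : ℝ) : ℂ) := by
        rw [eigB L α w wt k hk, dotProduct_smul, star_vecB, dotBB_self L k h1 h2]
        simp only [smul_eq_mul]
        push_cast
        ring
      have hvv : (star (vecM (BMat L k)) ⬝ᵥ vecM (BMat L k)).re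
          = (L:ℝ) - (k.natAbs:ℝ) := by
        rw [star_vecB, dotBB_self L k h1 h2, Complex.ofReal_re]
      have hr := rayleigh_upper hJ (vecM (BMat L k))
      rw [hq, Complex.ofReal_re, hvv] at hr
      exact le_of_mul_le_mul_right hr hNB
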